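/- Let n ≥ 1 and let Z₁,…,Z_n be i.i.d. standard Gaussian random variables (mean 0, variance 1). Then for every ε with 0 ≤ ε ≤ 1, P(|n⁻¹·Σ_{i=1}^n Zᵢ² − 1| ≥ ε) ≤ 2·exp(−n·ε²/8). -/

import Mathlib

open MeasureTheory ProbabilityTheory Real

lemma gaussian_pdf_mul_exp (t x : ℝ) :
    Real.exp (t * x ^ 2) * gaussianPDFReal 0 1 x
      = (Real.sqrt (2 * π))⁻¹ * Real.exp (-(1/2 - t) * x ^ 2) := by
  simp only [gaussianPDFReal, NNReal.coe_one, mul_one, sub_zero]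
  rw [mul_comm (Real.exp _), mul_assoc, ← Real.exp_add]
  ring_nf

lemma integrable_exp_sq_gaussian {t : ℝ} (ht : t < 1/2) :
    Integrable (fun x => Real.exp (t * x ^ 2)) (gaussianReal 0 1) := by
  rw [gaussianReal_of_var_ne_zero 0 one_ne_zero]
  rw [gaussianPDF_def, integrable_withDensity_iff
    ((measurable_gaussianPDFReal 0 1).ennreal_ofReal)
    (ae_of_all _ fun x => ENNReal.ofReal_lt_top)]
  simp_rw [ENNReal.toReal_ofReal (gaussianPDFReal_nonneg 0 1 _), gaussian_pdf_mul_exp]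
  exact ((integrable_exp_neg_mul_sq (by linarith)).const_mul _)

lemma integral_exp_sq_gaussian {t : ℝ} (ht : t < 1/2) :
    ∫ x, Real.exp (t * x ^ 2) ∂(gaussianReal 0 1) = (Real.sqrt (1 - 2*t))⁻¹ := by
  rw [gaussianReal_of_var_ne_zero 0 one_ne_zero, gaussianPDF_def]
  have : (fun x => ENNReal.ofReal (gaussianPDFReal 0 1 x))
      = fun x => (((gaussianPDFReal 0 1 x).toNNReal : NNReal) : ENNReal) := rfl
  rw [this, integral_withDensity_eq_integral_smul
    ((measurable_gaussianPDFReal 0 1).real_toNNReal)]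
  simp only [NNReal.smul_def, smul_eq_mul,
    Real.coe_toNNReal _ (gaussianPDFReal_nonneg 0 1 _)]
  have h1 : ∀ x : ℝ, gaussianPDFReal 0 1 x * Real.exp (t * x ^ 2)
      = (Real.sqrt (2 * π))⁻¹ * Real.exp (-(1/2 - t) * x ^ 2) := by
    intro x; rw [mul_comm]; exact gaussian_pdf_mul_exp t x
  simp_rw [h1]
  rw [integral_const_mul, integral_gaussian]
  have h2 : 0 < 1/2 - t := by linarith
  rw [← Real.sqrt_inv, ← Real.sqrt_mul (by positivity), ← Real.sqrt_inv]
  congr 1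
  have hπ : (0:ℝ) < π := Real.pi_pos
  have h3 : (1:ℝ) - 2*t ≠ 0 := by linarith
  rw [eq_comm, inv_eq_iff_eq_inv]
  field_simp

lemma keyA {x : ℝ} (h0 : 0 ≤ x) (h1 : x ≤ 1/2) : 1 ≤ (1 - x) * Real.exp (x + x^2) := by
  have hu : 0 ≤ x + x^2 := by positivity
  have h := Real.sum_le_exp_of_nonneg hu 3
  rw [Finset.sum_range_succ, Finset.sum_range_succ, Finset.sum_range_succ,
    Finset.sum_range_zero] at h
  norm_num [Nat.factorial] at h
  nlinarith [h, sq_nonneg x, sq_nonneg (x + x^2)]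

lemma keyB {x : ℝ} (h0 : 0 ≤ x) (h1 : x ≤ 1) : Real.exp (x - x^2) ≤ 1 + x := by
  have h2 : (0:ℝ) < 1 - (x - x^2) := by nlinarith
  have h3 : 1 - (x - x^2) ≤ Real.exp (-(x - x^2)) := by
    have := Real.add_one_le_exp (-(x - x^2)); linarith
  have h4 : Real.exp (x - x^2) * (1 - (x - x^2)) ≤ 1 := by
    calc Real.exp (x-x^2) * (1 - (x-x^2))
        ≤ Real.exp (x-x^2) * Real.exp (-(x-x^2)) :=
          mul_le_mul_of_nonneg_left h3 (Real.exp_pos _).le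
      _ = 1 := by rw [← Real.exp_add]; simp
  nlinarith [Real.exp_pos (x - x^2)]

lemma factor_upper {ε : ℝ} (h0 : 0 ≤ ε) (h1 : ε ≤ 1) :
    (Real.sqrt (1 - ε/2))⁻¹ ≤ Real.exp ((ε/4)*(1+ε) - ε^2/8) := by
  set x := ε/2 with hxdef
  have hx0 : 0 ≤ x := by positivity
  have hx1 : x ≤ 1/2 := by rw [hxdef]; linarith
  have hA := keyA hx0 hx1
  have hexp : (ε/4)*(1+ε) - ε^2/8 = (x + x^2)/2 := by rw [hxdef]; ring
  have h1x : (0:ℝ) < 1 - x := by linarith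
  have hs : 0 < Real.sqrt (1-x) := Real.sqrt_pos.mpr h1x
  have hsq : (Real.sqrt (1-x) * Real.exp ((x+x^2)/2))^2 = (1-x)*Real.exp (x+x^2) := by
    rw [mul_pow, Real.sq_sqrt h1x.le, sq, ← Real.exp_add]
    norm_num
  have h2 : (1:ℝ) ≤ Real.exp ((x+x^2)/2) * Real.sqrt (1-x) := by
    nlinarith [hsq, hA, mul_nonneg (Real.sqrt_nonneg (1-x)) (Real.exp_pos ((x+x^2)/2)).le,
      sq_nonneg (Real.sqrt (1-x) * Real.exp ((x+x^2)/2) - 1)]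
  have hgoal : ε/2 = x := rfl
  rw [hexp, show (1 : ℝ) - ε/2 = 1 - x from rfl, inv_eq_one_div, div_le_iff₀ hs]
  linarith

lemma factor_lower {ε : ℝ} (h0 : 0 ≤ ε) (h1 : ε ≤ 1) :
    (Real.sqrt (1 + ε/2))⁻¹ ≤ Real.exp (-(ε^2/8) - (ε/4)*(1-ε)) := by
  set x := ε/2 with hxdef
  have hx0 : 0 ≤ x := by positivity
  have hx1 : x ≤ 1 := by rw [hxdef]; linarith
  have hB := keyB hx0 hx1
  have hexp : -(ε^2/8) - (ε/4)*(1-ε) = -((x - x^2)/2) := by rw [hxdef]; ring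
  have hs : 0 < Real.sqrt (1+x) := Real.sqrt_pos.mpr (by linarith)
  have h2 : Real.exp ((x - x^2)/2) ≤ Real.sqrt (1+x) := by
    rw [show (1:ℝ)+x = 1+x from rfl, ← Real.sqrt_sq (Real.exp_nonneg _)]
    apply Real.sqrt_le_sqrt
    rw [sq, ← Real.exp_add]
    calc Real.exp ((x-x^2)/2 + (x-x^2)/2) = Real.exp (x - x^2) := by norm_num
      _ ≤ 1 + x := hB
  rw [hexp, Real.exp_neg]
  exact inv_anti₀ (Real.exp_pos _) h2

/-- **χ²-concentration.** If `Z₁, …, Z_n` are i.i.d. standard Gaussians,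
then for every `0 ≤ ε ≤ 1`,
`P(|n⁻¹ Σᵢ Zᵢ² − 1| ≥ ε) ≤ 2 exp(−n ε² / 8)`. -/
theorem chi_squared_concentration
    {Ω : Type*} [MeasurableSpace Ω] (P : Measure Ω) [IsProbabilityMeasure P]
    {n : ℕ} (hn : 1 ≤ n)
    (Z : Fin n → Ω → ℝ) (hZmeas : ∀ i, Measurable (Z i))
    (hindep : iIndepFun Z P)
    (hlaw : ∀ i, Measure.map (Z i) P = gaussianReal 0 1) :
    ∀ ε : ℝ, 0 ≤ ε → ε ≤ 1 →
      P {ω | ε ≤ |(n : ℝ)⁻¹ * ∑ i, Z i ω ^ 2 - 1|}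
        ≤ ENNReal.ofReal (2 * Real.exp (-((n : ℝ) * ε ^ 2 / 8))) := by
  intro ε hε0 hε1
  set X : Fin n → Ω → ℝ := fun i ω => Z i ω ^ 2 with hXdef
  have hXmeas : ∀ i, Measurable (X i) := fun i => (hZmeas i).pow_const 2
  have hXindep : iIndepFun X P :=
    hindep.comp (fun _ x => x ^ 2) (fun _ => measurable_id.pow_const 2)
  have hn0 : (0:ℝ) < (n:ℝ) := by exact_mod_cast hn
  -- integrability and mgf of each X i
  have hcont : ∀ t : ℝ, Continuous fun x : ℝ => Real.exp (t * x ^ 2) := by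
    intro t; continuity
  have hint : ∀ t : ℝ, t < 1/2 → ∀ i, Integrable (fun ω => Real.exp (t * X i ω)) P := by
    intro t ht i
    have h := integrable_exp_sq_gaussian ht
    rw [← hlaw i] at h
    exact (integrable_map_measure ((hcont t).aestronglyMeasurable)
      (hZmeas i).aemeasurable).mp h
  have hmgf : ∀ t : ℝ, t < 1/2 → ∀ i, mgf (X i) P t = (Real.sqrt (1 - 2*t))⁻¹ := by
    intro t ht i
    have : mgf (X i) P t = ∫ x, Real.exp (t * x ^ 2) ∂(Measure.map (Z i) P) := by
      rw [integral_map (hZmeas i).aemeasurable ((hcont t).aestronglyMeasurable)]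
      rfl
    rw [this, hlaw i, integral_exp_sq_gaussian ht]
  have hmgf_sum : ∀ t : ℝ, t < 1/2 →
      mgf (∑ i, X i) P t = ((Real.sqrt (1 - 2*t))⁻¹) ^ n := by
    intro t ht
    rw [hXindep.mgf_sum hXmeas Finset.univ]
    simp [hmgf t ht]
  -- the two tail sets
  set s1 : Set Ω := {ω | (n:ℝ)*(1+ε) ≤ ∑ i, Z i ω ^ 2} with hs1def
  set s2 : Set Ω := {ω | ∑ i, Z i ω ^ 2 ≤ (n:ℝ)*(1-ε)} with hs2def
  have hsum_apply : ∀ ω, (∑ i, X i) ω = ∑ i, Z i ω ^ 2 := by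
    intro ω; simp [hXdef]
  have hsub : {ω | ε ≤ |(n : ℝ)⁻¹ * ∑ i, Z i ω ^ 2 - 1|} ⊆ s1 ∪ s2 := by
    intro ω hω
    simp only [Set.mem_setOf_eq] at hω
    rcases le_abs.mp hω with h | h
    · left
      have h2 : 1 + ε ≤ (n:ℝ)⁻¹ * ∑ i, Z i ω ^ 2 := by linarith
      have := mul_le_mul_of_nonneg_left h2 hn0.le
      rwa [← mul_assoc, mul_inv_cancel₀ hn0.ne', one_mul] at this
    · right
      have h2 : (n:ℝ)⁻¹ * ∑ i, Z i ω ^ 2 ≤ 1 - ε := by linarith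
      have := mul_le_mul_of_nonneg_left h2 hn0.le
      rwa [← mul_assoc, mul_inv_cancel₀ hn0.ne', one_mul] at this
  have hE : (0:ℝ) < Real.exp (-((n : ℝ) * ε ^ 2 / 8)) := Real.exp_pos _
  -- upper tail
  have ht1 : (ε/4 : ℝ) < 1/2 := by linarith
  have hup : P s1 ≤ ENNReal.ofReal (Real.exp (-((n : ℝ) * ε ^ 2 / 8))) := by
    rw [ENNReal.le_ofReal_iff_toReal_le (measure_ne_top P s1) hE.le]
    have hch := measure_ge_le_exp_mul_mgf (μ := P) (X := ∑ i, X i) ((n:ℝ)*(1+ε))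
      (t := ε/4) (by linarith)
      (hXindep.integrable_exp_mul_sum hXmeas (fun i _ => hint _ ht1 i))
    have hset : {ω | (n:ℝ)*(1+ε) ≤ (∑ i, X i) ω} = s1 := by
      ext ω; simp [hsum_apply ω, hs1def, hXdef]
    rw [hset, hmgf_sum _ ht1] at hch
    refine hch.trans ?_
    have hf := factor_upper hε0 hε1
    have hc0 : (0:ℝ) ≤ (Real.sqrt (1 - 2*(ε/4)))⁻¹ := by positivity
    calc Real.exp (-(ε/4) * ((n:ℝ)*(1+ε))) * ((Real.sqrt (1 - 2*(ε/4)))⁻¹) ^ n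
        ≤ Real.exp (-(ε/4) * ((n:ℝ)*(1+ε)))
            * (Real.exp ((ε/4)*(1+ε) - ε^2/8)) ^ n := by
          gcongr
          rw [show (1:ℝ) - 2*(ε/4) = 1 - ε/2 by ring]; exact hf
      _ = Real.exp (-(ε/4) * ((n:ℝ)*(1+ε)) + (n:ℝ)*((ε/4)*(1+ε) - ε^2/8)) := by
          rw [← Real.exp_nat_mul, ← Real.exp_add]
      _ = Real.exp (-((n : ℝ) * ε ^ 2 / 8)) := by congr 1; ring
  -- lower tail
  have ht2 : (-(ε/4) : ℝ) < 1/2 := by linarith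
  have hlo : P s2 ≤ ENNReal.ofReal (Real.exp (-((n : ℝ) * ε ^ 2 / 8))) := by
    rw [ENNReal.le_ofReal_iff_toReal_le (measure_ne_top P s2) hE.le]
    have hch := measure_le_le_exp_mul_mgf (μ := P) (X := ∑ i, X i) ((n:ℝ)*(1-ε))
      (t := -(ε/4)) (by linarith)
      (hXindep.integrable_exp_mul_sum hXmeas (fun i _ => hint _ ht2 i))
    have hset : {ω | (∑ i, X i) ω ≤ (n:ℝ)*(1-ε)} = s2 := by
      ext ω; simp [hsum_apply ω, hs2def, hXdef]
    rw [hset, hmgf_sum _ ht2] at hch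
    refine hch.trans ?_
    have hf := factor_lower hε0 hε1
    have hc0 : (0:ℝ) ≤ (Real.sqrt (1 - 2*(-(ε/4))))⁻¹ := by positivity
    calc Real.exp (-(-(ε/4)) * ((n:ℝ)*(1-ε))) * ((Real.sqrt (1 - 2*(-(ε/4))))⁻¹) ^ n
        ≤ Real.exp (-(-(ε/4)) * ((n:ℝ)*(1-ε)))
            * (Real.exp (-(ε^2/8) - (ε/4)*(1-ε))) ^ n := by
          gcongr
          rw [show (1:ℝ) - 2*(-(ε/4)) = 1 + ε/2 by ring]; exact hf
      _ = Real.exp (-(-(ε/4)) * ((n:ℝ)*(1-ε)) + (n:ℝ)*(-(ε^2/8) - (ε/4)*(1-ε))) := by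
          rw [← Real.exp_nat_mul, ← Real.exp_add]
      _ = Real.exp (-((n : ℝ) * ε ^ 2 / 8)) := by congr 1; ring
  calc P {ω | ε ≤ |(n : ℝ)⁻¹ * ∑ i, Z i ω ^ 2 - 1|} ≤ P (s1 ∪ s2) := measure_mono hsub
    _ ≤ P s1 + P s2 := measure_union_le s1 s2
    _ ≤ ENNReal.ofReal (Real.exp (-((n : ℝ) * ε ^ 2 / 8)))
        + ENNReal.ofReal (Real.exp (-((n : ℝ) * ε ^ 2 / 8))) := add_le_add hup hlo
    _ = ENNReal.ofReal (2 * Real.exp (-((n : ℝ) * ε ^ 2 / 8))) := by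
        rw [← ENNReal.ofReal_add hE.le hE.le]; congr 1; ring
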